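/- Let φ̃(x) = x + δφ_e(x) with φ_e an even polynomial, φ_e(0)=0, and let L(x) = -x + L₁(x)δ + O(δ²) with L₁(x) = -2φ_e(x) be defined by φ̃(L(x)) = -φ̃(x). Then the integral I(x)/4 = ∫ₓ^{L(x)} φ̃(s)(φ̃'(s))² ds satisfies I(x)/4 = -2δ∫₀ˣ s·φ_e'(s) ds + O(δ²) as δ → 0, uniformly for x in a compact subinterval of (0,1). -/

import Mathlib

/-- Integral of an even function over a symmetric interval. -/
lemma even_integral_helper (g : ℝ → ℝ) (hg : Continuous g) (he : ∀ s : ℝ, g (-s) = g s)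
    (x : ℝ) : ∫ s in (-x)..x, g s = 2 * ∫ s in (0:ℝ)..x, g s := by
  have h1 : ∫ s in (-x)..(0:ℝ), g s = ∫ s in (0:ℝ)..x, g s := by
    have h := intervalIntegral.integral_comp_neg g (a := 0) (b := x)
    simp only [he, neg_zero] at h
    exact h.symm
  rw [← intervalIntegral.integral_add_adjacent_intervals
      (hg.intervalIntegrable (-x) 0) (hg.intervalIntegrable 0 x), h1]
  ring

set_option maxHeartbeats 1000000 in
/-- First-order expansion in δ of the slow divergence integral of the non-smooth
center model with transition function φ̃(x) = x + δφₑ(x):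
I(x)/4 = ∫ₓ^{L(x)} φ̃(s)(φ̃'(s))² ds = -2δ∫₀ˣ s·φₑ'(s) ds + O(δ²), uniformly on
compact subintervals of (0,1). -/
theorem stmt11 (φₑ : ℝ → ℝ) (p : Polynomial ℝ)
    (hp : ∀ x : ℝ, φₑ x = p.eval x)
    (heven : ∀ x : ℝ, φₑ (-x) = φₑ x) (h0 : φₑ 0 = 0)
    (L : ℝ → ℝ → ℝ) (a b : ℝ) (hab : 0 < a ∧ a ≤ b ∧ b < 1)
    (δ₁ : ℝ) (hδ₁ : 0 < δ₁)
    (hLdef : ∀ δ ∈ Set.Icc (0 : ℝ) δ₁, ∀ x ∈ Set.Icc a b,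
      L δ x < 0 ∧ (L δ x + δ * φₑ (L δ x)) = -(x + δ * φₑ x))
    (hLexp : ∃ C > (0 : ℝ), ∀ δ ∈ Set.Icc (0 : ℝ) δ₁, ∀ x ∈ Set.Icc a b,
      |L δ x - (-x + (-2 * φₑ x) * δ)| ≤ C * δ ^ 2) :
    ∃ C > (0 : ℝ), ∃ δ₀ > (0 : ℝ), δ₀ ≤ δ₁ ∧
      ∀ δ ∈ Set.Icc (0 : ℝ) δ₀, ∀ x ∈ Set.Icc a b,
        |(∫ s in x..(L δ x),
            (s + δ * φₑ s) * (deriv (fun u => u + δ * φₑ u) s) ^ 2) -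
          (-2 * δ * ∫ s in (0:ℝ)..x, s * deriv φₑ s)| ≤ C * δ ^ 2 := by
  obtain ⟨C, hCpos, hL⟩ := hLexp
  obtain ⟨ha, hab', hb1⟩ := hab
  have hb : 0 < b := lt_of_lt_of_le ha hab'
  have heq : φₑ = fun x => Polynomial.eval x p := funext hp
  -- basic differentiability facts
  have hD' : ∀ s : ℝ, HasDerivAt φₑ (Polynomial.eval s (Polynomial.derivative p)) s := by
    intro s; rw [heq]; exact p.hasDerivAt s
  have hDeq : ∀ s : ℝ, deriv φₑ s = Polynomial.eval s (Polynomial.derivative p) :=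
    fun s => (hD' s).deriv
  have hDD : ∀ s : ℝ, HasDerivAt φₑ (deriv φₑ s) s := by
    intro s; rw [hDeq s]; exact hD' s
  have hφc : Continuous φₑ := by rw [heq]; exact p.continuous
  have hDc : Continuous (deriv φₑ) := by
    have h : deriv φₑ = fun s => Polynomial.eval s (Polynomial.derivative p) := funext hDeq
    rw [h]; exact (Polynomial.derivative p).continuous
  have hodd : ∀ s : ℝ, deriv φₑ (-s) = -deriv φₑ s := by
    intro s
    have h2 : (fun x : ℝ => φₑ (-x)) = φₑ := funext heven
    have h3 := deriv_comp_neg φₑ s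
    rw [h2] at h3
    linarith only [h3]
  have htilde : ∀ δ s : ℝ, deriv (fun u => u + δ * φₑ u) s = 1 + δ * deriv φₑ s := by
    intro δ s
    exact ((hasDerivAt_id s).add ((hDD s).const_mul δ)).deriv
  -- bound M0 for |φₑ| on [-b,b]
  obtain ⟨M0, hM0⟩ := (isCompact_Icc (a := -b) (b := b)).exists_bound_of_continuousOn
    hφc.continuousOn
  have hM0nn : 0 ≤ M0 :=
    le_trans (norm_nonneg (φₑ b)) (hM0 b ⟨by linarith only [hb], le_rfl⟩)
  have hM0' : ∀ s ∈ Set.Icc (-b) b, |φₑ s| ≤ M0 := by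
    intro s hs; simpa [Real.norm_eq_abs] using hM0 s hs
  -- big box [-B,B]
  set B : ℝ := b + 2 * M0 * δ₁ + C * δ₁ ^ 2 with hBdef
  have hbB : b ≤ B := by
    rw [hBdef]
    linarith only [mul_nonneg hM0nn hδ₁.le, mul_nonneg hCpos.le (sq_nonneg δ₁)]
  have hBpos : 0 < B := lt_of_lt_of_le hb hbB
  -- bound M for |φₑ| + |deriv φₑ| on [-B,B]
  obtain ⟨M, hM⟩ := (isCompact_Icc (a := -B) (b := B)).exists_bound_of_continuousOn
    ((hφc.norm.add hDc.norm).continuousOn)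
  have hMb : ∀ s ∈ Set.Icc (-B) B, |φₑ s| ≤ M ∧ |deriv φₑ s| ≤ M := by
    intro s hs
    have h := hM s hs
    have h' : |φₑ s| + |deriv φₑ s| ≤ M := by
      have hnn : (0:ℝ) ≤ ‖φₑ s‖ + ‖deriv φₑ s‖ := by positivity
      simp only [Pi.add_apply] at h
      rw [Real.norm_eq_abs, abs_of_nonneg hnn] at h
      simpa [Real.norm_eq_abs] using h
    exact ⟨by linarith only [h', abs_nonneg (deriv φₑ s)],
      by linarith only [h', abs_nonneg (φₑ s)]⟩
  have hMnn : 0 ≤ M :=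
    le_trans (abs_nonneg _) (hMb B ⟨by linarith only [hBpos], le_rfl⟩).1
  -- constants
  set Mg2 : ℝ := 2 * M * M + B * M * M + δ₁ * M * M * M with hMg2def
  set Mg1 : ℝ := M + 2 * B * M + δ₁ * Mg2 with hMg1def
  have hMg2nn : 0 ≤ Mg2 := by rw [hMg2def]; positivity
  have hMg1nn : 0 ≤ Mg1 := by
    rw [hMg1def]
    have h1 : 0 ≤ 2 * B * M := by positivity
    have h2 : 0 ≤ δ₁ * Mg2 := mul_nonneg hδ₁.le hMg2nn
    linarith only [hMnn, h1, h2]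
  set K1 : ℝ := Mg2 * (2 * b) with hK1def
  set K2 : ℝ := Mg1 * (2 * M0 + C * δ₁) with hK2def
  set K3 : ℝ := M0 * (2 * M0 + C * δ₁) + C * B with hK3def
  have hK1nn : 0 ≤ K1 := by
    rw [hK1def]; exact mul_nonneg hMg2nn (by positivity)
  have hK2nn : 0 ≤ K2 := by
    rw [hK2def]
    exact mul_nonneg hMg1nn (by positivity)
  have hK3nn : 0 ≤ K3 := by
    rw [hK3def]
    have h1 : 0 ≤ M0 * (2 * M0 + C * δ₁) := mul_nonneg hM0nn (by positivity)
    have h2 : 0 ≤ C * B := by positivity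
    linarith only [h1, h2]
  refine ⟨K1 + K2 + K3 + 1, by linarith only [hK1nn, hK2nn, hK3nn], δ₁, hδ₁, le_rfl, ?_⟩
  intro δ hδ x hx
  obtain ⟨hδ0, hδδ₁⟩ := hδ
  obtain ⟨hax, hxb⟩ := hx
  have hx0 : 0 < x := lt_of_lt_of_le ha hax
  have hLx := hL δ ⟨hδ0, hδδ₁⟩ x ⟨hax, hxb⟩
  set L' : ℝ := L δ x with hL'def
  have hqx : |φₑ x| ≤ M0 := hM0' x ⟨by linarith only [hx0, hb], hxb⟩
  have he : |L' + x + 2 * φₑ x * δ| ≤ C * δ ^ 2 := by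
    have hr : L' - (-x + (-2 * φₑ x) * δ) = L' + x + 2 * φₑ x * δ := by ring
    rwa [hr] at hLx
  have hL'px : |L' + x| ≤ 2 * M0 * δ + C * δ ^ 2 := by
    have h1 : |2 * φₑ x * δ| ≤ 2 * M0 * δ := by
      rw [abs_mul, abs_of_nonneg hδ0, abs_mul]
      have h2 : |(2:ℝ)| = 2 := by norm_num
      rw [h2]
      have h4 := mul_le_mul_of_nonneg_right hqx hδ0
      linarith only [h4]
    have h3 := abs_add_le (L' + x + 2 * φₑ x * δ) (-(2 * φₑ x * δ))
    rw [add_neg_cancel_right, abs_neg] at h3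
    linarith only [h3, he, h1]
  have hδsq : δ ^ 2 ≤ δ₁ ^ 2 := pow_le_pow_left₀ hδ0 hδδ₁ 2
  have hxB : |x| ≤ B := by
    rw [abs_of_pos hx0]; linarith only [hxb, hbB]
  have hL'B : |L'| ≤ B := by
    have h1 : |L'| ≤ |L' + x| + |x| := by
      have h3 := abs_add_le (L' + x) (-x)
      rw [add_neg_cancel_right, abs_neg] at h3
      exact h3
    have h2 : 2 * M0 * δ ≤ 2 * M0 * δ₁ := by
      have := mul_le_mul_of_nonneg_left hδδ₁ hM0nn
      linarith only [this]
    have h3 : C * δ ^ 2 ≤ C * δ₁ ^ 2 := mul_le_mul_of_nonneg_left hδsq hCpos.le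
    rw [abs_of_pos hx0] at h1
    have h4 : |L'| ≤ (2 * M0 * δ + C * δ ^ 2) + x := by linarith only [h1, hL'px]
    rw [hBdef]
    linarith only [h4, h2, h3, hxb]
  -- the integrand and its decomposition
  set f : ℝ → ℝ := fun s => (s + δ * φₑ s) * (1 + δ * deriv φₑ s) ^ 2 with hfdef
  set g1 : ℝ → ℝ := fun s => φₑ s + 2 * s * deriv φₑ s with hg1def
  set g2 : ℝ → ℝ := fun s => 2 * φₑ s * deriv φₑ s + s * (deriv φₑ s) ^ 2
      + δ * φₑ s * (deriv φₑ s) ^ 2 with hg2def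
  have hfg : ∀ s : ℝ, f s = s + (δ * g1 s + δ ^ 2 * g2 s) := by
    intro s; simp only [hfdef, hg1def, hg2def]; ring
  have hfc : Continuous f := by
    apply Continuous.mul
    · exact continuous_id.add (continuous_const.mul hφc)
    · exact (continuous_const.add (continuous_const.mul hDc)).pow 2
  have hg1c : Continuous g1 := hφc.add ((continuous_const.mul continuous_id).mul hDc)
  have hg2c : Continuous g2 :=
    (((continuous_const.mul hφc).mul hDc).add (continuous_id.mul (hDc.pow 2))).add
      ((continuous_const.mul hφc).mul (hDc.pow 2))
  -- rewrite the goal integrand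
  have hgoal : (∫ s in x..L', (s + δ * φₑ s) * (deriv (fun u => u + δ * φₑ u) s) ^ 2)
      = ∫ s in x..L', f s := by
    apply intervalIntegral.integral_congr
    intro s _
    show (s + δ * φₑ s) * (deriv (fun u => u + δ * φₑ u) s) ^ 2 = f s
    rw [htilde δ s]
  rw [hgoal]
  set J : ℝ := ∫ s in (0:ℝ)..x, s * deriv φₑ s with hJdef
  -- FTC: ∫₀ˣ (φₑ + s φₑ') = x φₑ x
  have hFTC : ∫ s in (0:ℝ)..x, (φₑ s + s * deriv φₑ s) = x * φₑ x := by
    have hder : ∀ s ∈ Set.uIcc (0:ℝ) x, HasDerivAt (fun t => t * φₑ t)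
        (φₑ s + s * deriv φₑ s) s := by
      intro s _
      have h : HasDerivAt (fun t => t * φₑ t) (1 * φₑ s + s * deriv φₑ s) s :=
        (hasDerivAt_id' s).mul (hDD s)
      simpa using h
    rw [intervalIntegral.integral_eq_sub_of_hasDerivAt hder
      ((hφc.add (continuous_id.mul hDc)).intervalIntegrable 0 x)]
    simp
  have hg1int : ∫ s in (0:ℝ)..x, g1 s = x * φₑ x + J := by
    have i1 : IntervalIntegrable (fun s : ℝ => φₑ s + s * deriv φₑ s)
        MeasureTheory.volume 0 x := (hφc.add (continuous_id.mul hDc)).intervalIntegrable 0 x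
    have i2 : IntervalIntegrable (fun s : ℝ => s * deriv φₑ s)
        MeasureTheory.volume 0 x := (continuous_id.mul hDc).intervalIntegrable 0 x
    have hsplit : ∫ s in (0:ℝ)..x, g1 s
        = (∫ s in (0:ℝ)..x, (φₑ s + s * deriv φₑ s)) + ∫ s in (0:ℝ)..x, s * deriv φₑ s := by
      rw [← intervalIntegral.integral_add i1 i2]
      apply intervalIntegral.integral_congr
      intro s _
      simp only [hg1def]; ring
    rw [hsplit, hFTC, hJdef]
  have hg1even : ∀ s : ℝ, g1 (-s) = g1 s := by
    intro s; simp only [hg1def, heven s, hodd s]; ring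
  have hmid1 : ∫ s in x..(-x), g1 s = -2 * (x * φₑ x + J) := by
    rw [intervalIntegral.integral_symm, even_integral_helper g1 hg1c hg1even x, hg1int]
    ring
  have hid1 : ∫ s in x..(-x), (s:ℝ) = 0 := by
    rw [integral_id]; ring
  -- middle integral
  have hmid : ∫ s in x..(-x), f s
      = δ * (-2 * (x * φₑ x + J)) + δ ^ 2 * ∫ s in x..(-x), g2 s := by
    have ig1δ : IntervalIntegrable (fun s : ℝ => δ * g1 s) MeasureTheory.volume x (-x) :=
      (continuous_const.mul hg1c).intervalIntegrable x (-x)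
    have ig2δ : IntervalIntegrable (fun s : ℝ => δ ^ 2 * g2 s) MeasureTheory.volume x (-x) :=
      (continuous_const.mul hg2c).intervalIntegrable x (-x)
    have iid : IntervalIntegrable (fun s : ℝ => s) MeasureTheory.volume x (-x) :=
      continuous_id.intervalIntegrable x (-x)
    have h1 : ∫ s in x..(-x), f s = (∫ s in x..(-x), (s:ℝ))
        + ((∫ s in x..(-x), δ * g1 s) + ∫ s in x..(-x), δ ^ 2 * g2 s) := by
      rw [← intervalIntegral.integral_add ig1δ ig2δ,
        ← intervalIntegral.integral_add iid (ig1δ.add ig2δ)]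
      apply intervalIntegral.integral_congr
      intro s _
      exact hfg s
    rw [h1, hid1, intervalIntegral.integral_const_mul, intervalIntegral.integral_const_mul,
      hmid1]
    ring
  -- last integral
  have hlast : ∫ s in (-x)..L', f s
      = (L' ^ 2 - x ^ 2) / 2 + ∫ s in (-x)..L', (f s - s) := by
    have ifx : IntervalIntegrable f MeasureTheory.volume (-x) L' :=
      hfc.intervalIntegrable (-x) L'
    have iid2 : IntervalIntegrable (fun s : ℝ => s) MeasureTheory.volume (-x) L' :=
      continuous_id.intervalIntegrable (-x) L'
    rw [intervalIntegral.integral_sub ifx iid2, integral_id]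
    ring
  have htotal : (∫ s in x..L', f s) - (-2 * δ * J)
      = ((L' ^ 2 - x ^ 2) / 2 - 2 * x * φₑ x * δ) + (∫ s in (-x)..L', (f s - s))
        + δ ^ 2 * ∫ s in x..(-x), g2 s := by
    rw [← intervalIntegral.integral_add_adjacent_intervals (hfc.intervalIntegrable x (-x))
      (hfc.intervalIntegrable (-x) L'), hmid, hlast]
    ring
  -- pointwise bounds on the box
  have hg1b : ∀ s ∈ Set.Icc (-B) B, |g1 s| ≤ M + 2 * B * M := by
    intro s hs
    obtain ⟨h1, h2⟩ := hMb s hs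
    have hsB : |s| ≤ B := abs_le.2 ⟨hs.1, hs.2⟩
    have e1 : |2 * s * deriv φₑ s| ≤ 2 * B * M := by
      rw [abs_mul, abs_mul]
      have h3 : |(2:ℝ)| = 2 := by norm_num
      rw [h3]
      have h4 := mul_le_mul hsB h2 (abs_nonneg _) hBpos.le
      linarith only [h4]
    calc |g1 s| ≤ |φₑ s| + |2 * s * deriv φₑ s| := abs_add_le _ _
      _ ≤ M + 2 * B * M := add_le_add h1 e1
  have hg2b : ∀ s ∈ Set.Icc (-B) B, |g2 s| ≤ Mg2 := by
    intro s hs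
    obtain ⟨h1, h2⟩ := hMb s hs
    have hsB : |s| ≤ B := abs_le.2 ⟨hs.1, hs.2⟩
    have hd2 : |(deriv φₑ s) ^ 2| ≤ M * M := by
      rw [abs_pow, pow_two]
      exact mul_le_mul h2 h2 (abs_nonneg _) hMnn
    have e1 : |2 * φₑ s * deriv φₑ s| ≤ 2 * M * M := by
      rw [abs_mul, abs_mul]
      have h3 : |(2:ℝ)| = 2 := by norm_num
      rw [h3]
      have h4 := mul_le_mul h1 h2 (abs_nonneg _) hMnn
      linarith only [h4]
    have e2 : |s * (deriv φₑ s) ^ 2| ≤ B * M * M := by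
      rw [abs_mul]
      have h4 := mul_le_mul hsB hd2 (abs_nonneg _) hBpos.le
      linarith only [h4]
    have e3 : |δ * φₑ s * (deriv φₑ s) ^ 2| ≤ δ₁ * M * M * M := by
      rw [abs_mul, abs_mul, abs_of_nonneg hδ0]
      have h4 : δ * |φₑ s| ≤ δ₁ * M := mul_le_mul hδδ₁ h1 (abs_nonneg _) hδ₁.le
      have h5 := mul_le_mul h4 hd2 (abs_nonneg _) (mul_nonneg hδ₁.le hMnn)
      linarith only [h5]
    have t1 : |g2 s| ≤ |2 * φₑ s * deriv φₑ s + s * (deriv φₑ s) ^ 2|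
        + |δ * φₑ s * (deriv φₑ s) ^ 2| := abs_add_le _ _
    have t2 : |2 * φₑ s * deriv φₑ s + s * (deriv φₑ s) ^ 2|
        ≤ |2 * φₑ s * deriv φₑ s| + |s * (deriv φₑ s) ^ 2| := abs_add_le _ _
    rw [hMg2def]
    linarith only [t1, t2, e1, e2, e3]
  -- endpoints in the box
  have hxIcc := abs_le.1 hxB
  have hL'Icc := abs_le.1 hL'B
  have hxmem : x ∈ Set.Icc (-B) B := ⟨hxIcc.1, hxIcc.2⟩
  have hnxmem : -x ∈ Set.Icc (-B) B :=
    ⟨by linarith only [hxIcc.2], by linarith only [hxIcc.1]⟩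
  have hL'mem : L' ∈ Set.Icc (-B) B := ⟨hL'Icc.1, hL'Icc.2⟩
  -- bound on ∫ g2 over [x, -x]
  have hG2 : |∫ s in x..(-x), g2 s| ≤ K1 := by
    have hsub : Set.uIoc x (-x) ⊆ Set.Icc (-B) B :=
      subset_trans Set.Ioc_subset_Icc_self (Set.uIcc_subset_Icc hxmem hnxmem)
    have h := intervalIntegral.norm_integral_le_of_norm_le_const
      (C := Mg2) (f := g2) (a := x) (b := -x) (fun s hs => by
        simpa [Real.norm_eq_abs] using hg2b s (hsub hs))
    rw [Real.norm_eq_abs] at h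
    have h2 : |(-x) - x| = 2 * x := by
      rw [abs_of_nonpos (by linarith only [hx0] : (-x) - x ≤ 0)]; ring
    rw [h2] at h
    have h3 : Mg2 * (2 * x) ≤ Mg2 * (2 * b) :=
      mul_le_mul_of_nonneg_left (by linarith only [hxb]) hMg2nn
    rw [hK1def]
    linarith only [h, h3]
  -- bound on ∫ (f - s) over [-x, L']
  have hE3 : |∫ s in (-x)..L', (f s - s)| ≤ K2 * δ ^ 2 := by
    have hsub : Set.uIoc (-x) L' ⊆ Set.Icc (-B) B :=
      subset_trans Set.Ioc_subset_Icc_self (Set.uIcc_subset_Icc hnxmem hL'mem)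
    have hpt : ∀ s ∈ Set.uIoc (-x) L', ‖f s - s‖ ≤ δ * Mg1 := by
      intro s hs
      have hs' := hsub hs
      have hg1s := hg1b s hs'
      have hg2s := hg2b s hs'
      have hfs : f s - s = δ * g1 s + δ ^ 2 * g2 s := by rw [hfg s]; ring
      rw [Real.norm_eq_abs, hfs]
      have u0 : |δ * g1 s + δ ^ 2 * g2 s| ≤ |δ * g1 s| + |δ ^ 2 * g2 s| := abs_add_le _ _
      have u1 : |δ * g1 s| = δ * |g1 s| := by rw [abs_mul, abs_of_nonneg hδ0]
      have u2 : |δ ^ 2 * g2 s| = δ ^ 2 * |g2 s| := by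
        rw [abs_mul, abs_of_nonneg (sq_nonneg δ)]
      have t1 := mul_le_mul_of_nonneg_left hg1s hδ0
      have t2 : (δ * δ) * |g2 s| ≤ (δ * δ₁) * Mg2 :=
        mul_le_mul (mul_le_mul_of_nonneg_left hδδ₁ hδ0) hg2s (abs_nonneg _)
          (mul_nonneg hδ0 hδ₁.le)
      rw [hMg1def]
      nlinarith only [u0, u1, u2, t1, t2]
    have h := intervalIntegral.norm_integral_le_of_norm_le_const hpt
    rw [Real.norm_eq_abs, sub_neg_eq_add] at h
    have h1 : δ * Mg1 * |L' + x| ≤ δ * Mg1 * (2 * M0 * δ + C * δ ^ 2) :=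
      mul_le_mul_of_nonneg_left hL'px (mul_nonneg hδ0 hMg1nn)
    have u : (C * Mg1 * δ ^ 2) * δ ≤ (C * Mg1 * δ ^ 2) * δ₁ :=
      mul_le_mul_of_nonneg_left hδδ₁
        (by positivity)
    rw [hK2def]
    nlinarith only [h, h1, u]
  -- bound on the quadratic term
  have hA : |(L' ^ 2 - x ^ 2) / 2 - 2 * x * φₑ x * δ| ≤ K3 * δ ^ 2 := by
    have hid : (L' ^ 2 - x ^ 2) / 2 - 2 * x * φₑ x * δ
        = -(φₑ x) * δ * (L' + x) + (L' + x + 2 * φₑ x * δ) * ((L' - x) / 2) := by ring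
    have hL'mx : |L' - x| ≤ 2 * B := by
      calc |L' - x| ≤ |L'| + |x| := abs_sub _ _
        _ ≤ 2 * B := by linarith only [hL'B, hxB]
    have e1 : |(-(φₑ x)) * δ * (L' + x)| ≤ M0 * δ * (2 * M0 * δ + C * δ ^ 2) := by
      rw [abs_mul, abs_mul, abs_neg, abs_of_nonneg hδ0]
      exact mul_le_mul (mul_le_mul_of_nonneg_right hqx hδ0) hL'px (abs_nonneg _)
        (mul_nonneg hM0nn hδ0)
    have e2 : |(L' + x + 2 * φₑ x * δ) * ((L' - x) / 2)| ≤ C * δ ^ 2 * B := by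
      rw [abs_mul]
      have h1 : |(L' - x) / 2| ≤ B := by
        rw [abs_div]
        have h2 : |(2:ℝ)| = 2 := by norm_num
        rw [h2, div_le_iff₀ (by norm_num : (0:ℝ) < 2)]
        linarith only [hL'mx]
      exact mul_le_mul he h1 (abs_nonneg _) (by positivity)
    have u : (C * M0 * δ ^ 2) * δ ≤ (C * M0 * δ ^ 2) * δ₁ :=
      mul_le_mul_of_nonneg_left hδδ₁ (by positivity)
    rw [hid]
    have t0 := abs_add_le ((-(φₑ x)) * δ * (L' + x)) ((L' + x + 2 * φₑ x * δ) * ((L' - x) / 2))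
    rw [hK3def]
    nlinarith only [t0, e1, e2, u]
  -- put everything together
  rw [htotal]
  have hsq : (0:ℝ) ≤ δ ^ 2 := sq_nonneg δ
  have t0 := abs_add_le (((L' ^ 2 - x ^ 2) / 2 - 2 * x * φₑ x * δ)
      + (∫ s in (-x)..L', (f s - s))) (δ ^ 2 * ∫ s in x..(-x), g2 s)
  have t1 := abs_add_le ((L' ^ 2 - x ^ 2) / 2 - 2 * x * φₑ x * δ)
      (∫ s in (-x)..L', (f s - s))
  have t2 : |δ ^ 2 * ∫ s in x..(-x), g2 s| = δ ^ 2 * |∫ s in x..(-x), g2 s| := by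
    rw [abs_mul, abs_of_nonneg hsq]
  have t3 := mul_le_mul_of_nonneg_left hG2 hsq
  nlinarith only [t0, t1, t2, t3, hA, hE3, hsq]
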